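/- Let S be a simple graph on a finite vertex type V with p vertices, and suppose V can be partitioned into pairwise disjoint parts such that exactly q of the parts are singletons, and every part W with more than one element either consists of exactly two vertices that are adjacent in S, or induces a subgraph of S that has an odd number of vertices and contains a Hamiltonian cycle. Then there exists a constant C > 0 such that for every finite simple graph G with n vertices and m edges, the number of injective graph homomorphisms from S to G is at most C · n^q · m^{(p−q)/2}. -/

import Mathlib

open Finset in
/-- Frobenius-type submultiplicativity. -/
lemma frobSq_mul_le {W : Type} [Fintype W] (M N : Matrix W W ℝ) :
    ∑ u, ∑ v, ((M * N) u v) ^ 2 ≤ (∑ u, ∑ v, (M u v) ^ 2) * (∑ u, ∑ v, (N u v) ^ 2) := by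
  have h1 : ∀ u v, ((M * N) u v) ^ 2 ≤ (∑ w, (M u w) ^ 2) * (∑ w, (N w v) ^ 2) := by
    intro u v
    simpa [Matrix.mul_apply] using sum_mul_sq_le_sq_mul_sq univ (fun w => M u w) (fun w => N w v)
  calc ∑ u, ∑ v, ((M * N) u v) ^ 2
      ≤ ∑ u, ∑ v, (∑ w, (M u w) ^ 2) * (∑ w, (N w v) ^ 2) := by
        gcongr with u _ v _; exact h1 u v
    _ = (∑ u, ∑ w, (M u w) ^ 2) * (∑ v, ∑ w, (N w v) ^ 2) := by
        rw [← sum_mul_sum]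
    _ = (∑ u, ∑ v, (M u v) ^ 2) * (∑ u, ∑ v, (N u v) ^ 2) := by
        rw [Finset.sum_comm (f := fun v w => (N w v)^2)]

open Finset in
lemma frobSq_pow_le {W : Type} [Fintype W] [DecidableEq W] (M : Matrix W W ℝ) {k : ℕ} (hk : 1 ≤ k)
    (hM : 0 ≤ ∑ u, ∑ v, (M u v) ^ 2) :
    ∑ u, ∑ v, ((M ^ k) u v) ^ 2 ≤ (∑ u, ∑ v, (M u v) ^ 2) ^ k := by
  induction k with
  | zero => omega
  | succ k ih =>
    rcases Nat.eq_or_lt_of_le hk with h | h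
    · simp [← h]
    · have hk' : 1 ≤ k := by omega
      calc ∑ u, ∑ v, ((M ^ (k+1)) u v) ^ 2
          = ∑ u, ∑ v, ((M ^ k * M) u v) ^ 2 := by rw [pow_succ]
        _ ≤ (∑ u, ∑ v, ((M ^ k) u v) ^ 2) * (∑ u, ∑ v, (M u v) ^ 2) := frobSq_mul_le _ _
        _ ≤ (∑ u, ∑ v, (M u v) ^ 2) ^ k * (∑ u, ∑ v, (M u v) ^ 2) := by
            gcongr
            exact ih hk'
        _ = (∑ u, ∑ v, (M u v) ^ 2) ^ (k+1) := by rw [pow_succ]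

open Finset in
/-- Trace of an odd power of a symmetric matrix. -/
lemma trace_odd_pow_le {W : Type} [Fintype W] [DecidableEq W] (M : Matrix W W ℝ) (hsym : M.IsSymm) {k : ℕ}
    (hk : 1 ≤ k) (hM : 0 ≤ ∑ u, ∑ v, (M u v) ^ 2) :
    Matrix.trace (M ^ (2 * k + 1)) ≤ (∑ u, ∑ v, (M u v) ^ 2) ^ ((2 * k + 1 : ℝ) / 2) := by
  have hsymk : ∀ j : ℕ, (M ^ j).IsSymm := fun j => hsym.pow j
  have key : Matrix.trace (M ^ (2 * k + 1)) = ∑ u, ∑ v, (M ^ k) u v * (M ^ (k+1)) u v := by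
    have : M ^ (2 * k + 1) = M ^ k * M ^ (k + 1) := by rw [← pow_add]; ring_nf
    rw [this, Matrix.trace]
    simp only [Matrix.diag_apply, Matrix.mul_apply]
    refine Finset.sum_congr rfl fun u _ => Finset.sum_congr rfl fun v _ => ?_
    congr 1
    exact (hsymk (k+1)).apply u v
  set F := ∑ u, ∑ v, (M u v) ^ 2 with hF
  have cs : ∑ u, ∑ v, (M ^ k) u v * (M ^ (k+1)) u v ≤
      Real.sqrt (∑ u, ∑ v, ((M ^ k) u v) ^ 2) * Real.sqrt (∑ u, ∑ v, ((M ^ (k+1)) u v) ^ 2) := by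
    have := Real.sum_mul_le_sqrt_mul_sqrt (Finset.univ : Finset (W × W))
      (fun p => (M ^ k) p.1 p.2) (fun p => (M ^ (k+1)) p.1 p.2)
    simpa [Fintype.sum_prod_type] using this
  have h1 : Real.sqrt (∑ u, ∑ v, ((M ^ k) u v) ^ 2) ≤ Real.sqrt (F ^ k) :=
    Real.sqrt_le_sqrt (frobSq_pow_le M hk hM)
  have h2 : Real.sqrt (∑ u, ∑ v, ((M ^ (k+1)) u v) ^ 2) ≤ Real.sqrt (F ^ (k+1)) :=
    Real.sqrt_le_sqrt (frobSq_pow_le M (by omega) hM)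
  have h3 : Real.sqrt (F ^ k) * Real.sqrt (F ^ (k+1)) = F ^ ((2 * k + 1 : ℝ) / 2) := by
    rw [← Real.sqrt_mul (by positivity), ← pow_add, Real.sqrt_eq_rpow,
      ← Real.rpow_natCast F (k + (k+1)), ← Real.rpow_mul hM]
    congr 1
    push_cast
    ring
  calc Matrix.trace (M ^ (2 * k + 1)) = ∑ u, ∑ v, (M ^ k) u v * (M ^ (k+1)) u v := key
    _ ≤ Real.sqrt (∑ u, ∑ v, ((M ^ k) u v) ^ 2) * Real.sqrt (∑ u, ∑ v, ((M ^ (k+1)) u v) ^ 2) := cs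
    _ ≤ Real.sqrt (F ^ k) * Real.sqrt (F ^ (k+1)) := by
        exact mul_le_mul h1 h2 (Real.sqrt_nonneg _) (Real.sqrt_nonneg _)
    _ = F ^ ((2 * k + 1 : ℝ) / 2) := h3

open Finset SimpleGraph in
lemma frobSq_adjMatrix {W : Type} [Fintype W] [DecidableEq W] (G : SimpleGraph W)
    [DecidableRel G.Adj] :
    ∑ u, ∑ v, ((G.adjMatrix ℝ) u v) ^ 2 = 2 * (G.edgeFinset.card : ℝ) := by
  have : ∀ u v : W, ((G.adjMatrix ℝ) u v) ^ 2 = if G.Adj u v then (1:ℝ) else 0 := by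
    intro u v; by_cases h : G.Adj u v <;> simp [h]
  simp only [this]
  have hdeg : ∀ u : W, ∑ v, (if G.Adj u v then (1:ℝ) else 0) = (G.degree u : ℝ) := by
    intro u
    rw [Finset.sum_boole, SimpleGraph.degree, neighborFinset_eq_filter]
  simp only [hdeg]
  have := G.sum_degrees_eq_twice_card_edges
  have : ((∑ v, G.degree v : ℕ) : ℝ) = ((2 * G.edgeFinset.card : ℕ) : ℝ) := by rw [this]
  push_cast at this
  rw [← this]


open SimpleGraph in
lemma closed_walk_count {W : Type} [Fintype W] [DecidableEq W] (G : SimpleGraph W)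
    [DecidableRel G.Adj] (t : ℕ) :
    (Nat.card (Σ a : W, {w : G.Walk a a // w.length = t}) : ℝ) =
      Matrix.trace ((G.adjMatrix ℝ) ^ t) := by
  rw [Nat.card_eq_fintype_card, Fintype.card_sigma, Matrix.trace]
  push_cast
  refine Finset.sum_congr rfl fun a _ => ?_
  rw [Matrix.diag_apply, SimpleGraph.adjMatrix_pow_apply_eq_card_walk]
  norm_cast


open SimpleGraph in
lemma odd_closed_walk_bound {W : Type} [Fintype W] [DecidableEq W] (G : SimpleGraph W)
    [DecidableRel G.Adj] {t : ℕ} (ht : Odd t) (ht3 : 3 ≤ t) :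
    (Nat.card (Σ a : W, {w : G.Walk a a // w.length = t}) : ℝ) ≤
      (2 * (G.edgeFinset.card : ℝ)) ^ ((t : ℝ) / 2) := by
  obtain ⟨k, hk⟩ := ht
  have hk1 : 1 ≤ k := by omega
  have h := trace_odd_pow_le (G.adjMatrix ℝ) G.isSymm_adjMatrix hk1 (by positivity)
  rw [frobSq_adjMatrix] at h
  rw [closed_walk_count, hk]
  convert h using 2
  push_cast
  ring

/-- Adjacency-preserving maps from the subgraph induced on a finset. -/
def PartMaps {V W : Type} (S : SimpleGraph V) (G : SimpleGraph W) (B : Finset V) : Type :=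
  {g : {x // x ∈ B} → W // ∀ u v : {x // x ∈ B}, S.Adj u.1 v.1 → G.Adj (g u) (g v)}

lemma card_partMaps_singleton {V W : Type} [Fintype W] (S : SimpleGraph V) (G : SimpleGraph W)
    (B : Finset V) (hB : B.card = 1) :
    Nat.card (PartMaps S G B) ≤ Fintype.card W := by
  have h1 : Nat.card (PartMaps S G B) ≤ Nat.card ({x // x ∈ B} → W) :=
    Nat.card_le_card_of_injective Subtype.val Subtype.val_injective
  rw [Nat.card_fun] at h1
  simp only [Nat.card_eq_fintype_card, Fintype.card_coe, hB, pow_one] at h1 ⊢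
  exact h1

open SimpleGraph in
lemma card_partMaps_pair {V W : Type} [DecidableEq V] [Fintype W] [DecidableEq W]
    (S : SimpleGraph V) (G : SimpleGraph W) [DecidableRel G.Adj]
    (B : Finset V) (hB : B.card = 2) {u v : V} (hu : u ∈ B) (hv : v ∈ B) (huv : S.Adj u v) :
    Nat.card (PartMaps S G B) ≤ 2 * G.edgeFinset.card := by
  have hne : u ≠ v := huv.ne
  have hBuv : ({u, v} : Finset V) = B := by
    apply Finset.eq_of_subset_of_card_le
    · intro x hx
      simp only [Finset.mem_insert, Finset.mem_singleton] at hx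
      rcases hx with rfl | rfl <;> assumption
    · rw [hB, Finset.card_pair hne]
  have key : Nat.card (PartMaps S G B) ≤ Nat.card G.Dart := by
    apply Nat.card_le_card_of_injective
      (fun g => (⟨(g.1 ⟨u, hu⟩, g.1 ⟨v, hv⟩), g.2 ⟨u, hu⟩ ⟨v, hv⟩ huv⟩ : G.Dart))
    intro g1 g2 hg
    have h1 : g1.1 ⟨u, hu⟩ = g2.1 ⟨u, hu⟩ := congrArg (fun d => d.toProd.1) hg
    have h2 : g1.1 ⟨v, hv⟩ = g2.1 ⟨v, hv⟩ := congrArg (fun d => d.toProd.2) hg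
    apply Subtype.ext
    funext x
    obtain ⟨x, hx⟩ := x
    have : x ∈ ({u, v} : Finset V) := hBuv ▸ hx
    simp only [Finset.mem_insert, Finset.mem_singleton] at this
    rcases this with rfl | rfl
    · exact h1
    · exact h2
  rwa [show Nat.card G.Dart = 2 * G.edgeFinset.card by
    rw [Nat.card_eq_fintype_card, G.dart_card_eq_twice_card_edges]] at key

open SimpleGraph in
lemma card_partMaps_odd {V W : Type} [DecidableEq V] [Fintype W] [DecidableEq W]
    (S : SimpleGraph V) (G : SimpleGraph W) [DecidableRel G.Adj]
    (B : Finset V) [Fintype ↥(B : Set V)] (hodd : Odd B.card) (h2 : 2 ≤ B.card)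
    (hham : (S.induce (B : Set V)).IsHamiltonian) :
    (Nat.card (PartMaps S G B) : ℝ) ≤
      (2 * (G.edgeFinset.card : ℝ)) ^ ((B.card : ℝ) / 2) := by
  have hcard : Fintype.card ↥(B : Set V) = B.card := by
    rw [← Set.toFinset_card, Finset.toFinset_coe]
  obtain ⟨a, pp, hcyc⟩ := hham (by omega)
  have hlen : pp.length = B.card := hcyc.length_eq.trans hcard
  let homg : PartMaps S G B → (S.induce (B : Set V) →g G) := fun g =>
    ⟨fun x => g.1 ⟨x.1, x.2⟩, fun {x y} hxy => g.2 ⟨x.1, x.2⟩ ⟨y.1, y.2⟩ hxy⟩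
  have key : Nat.card (PartMaps S G B) ≤
      Nat.card (Σ a' : W, {w : G.Walk a' a' // w.length = B.card}) := by
    apply Nat.card_le_card_of_injective
      (fun g => (⟨_, pp.map (homg g), by rw [SimpleGraph.Walk.length_map, hlen]⟩ :
        Σ a' : W, {w : G.Walk a' a' // w.length = B.card}))
    intro g1 g2 hg
    have hs := congrArg
      (fun x : (Σ a' : W, {w : G.Walk a' a' // w.length = B.card}) => x.2.1.support) hg
    simp only [SimpleGraph.Walk.support_map, List.map_inj_left] at hs
    apply Subtype.ext
    funext x
    exact hs ⟨x.1, x.2⟩ (hcyc.mem_support _)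
  calc (Nat.card (PartMaps S G B) : ℝ)
      ≤ (Nat.card (Σ a' : W, {w : G.Walk a' a' // w.length = B.card}) : ℝ) := by
        exact_mod_cast key
    _ ≤ (2 * (G.edgeFinset.card : ℝ)) ^ ((B.card : ℝ) / 2) := by
        apply odd_closed_walk_bound G hodd
        obtain ⟨k, hk⟩ := hodd
        omega

lemma prod_rpow_div_two {ι : Type*} {x : ℝ} (hx : 0 < x) (s : Finset ι) (c : ι → ℕ) :
    ∏ B ∈ s, x ^ ((c B : ℝ) / 2) = x ^ (((∑ B ∈ s, c B : ℕ) : ℝ) / 2) := by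
  classical
  induction s using Finset.induction with
  | empty => simp
  | insert a s' hB ih =>
    rw [Finset.prod_insert hB, Finset.sum_insert hB, ih]
    rw [← Real.rpow_add hx]
    congr 1
    push_cast
    ring

instance partMaps_finite {V W : Type} [Finite W] (S : SimpleGraph V) (G : SimpleGraph W)
    (B : Finset V) : Finite (PartMaps S G B) := by
  unfold PartMaps
  infer_instance

theorem stmt_10 {V : Type} [Fintype V] [DecidableEq V] (S : SimpleGraph V)
    (p q : ℕ) (hp : Fintype.card V = p)
    (P : Finpartition (Finset.univ : Finset V))
    (hq : (P.parts.filter fun B => B.card = 1).card = q)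
    (hparts : ∀ B ∈ P.parts, 1 < B.card →
      (B.card = 2 ∧ ∃ u ∈ B, ∃ v ∈ B, S.Adj u v) ∨
      (Odd B.card ∧ (S.induce (B : Set V)).IsHamiltonian)) :
    ∃ C : ℝ, 0 < C ∧
      ∀ (W : Type) (_ : Fintype W) (_ : DecidableEq W)
        (G : SimpleGraph W) (_ : DecidableRel G.Adj),
        (Nat.card {f : S →g G // Function.Injective f} : ℝ) ≤
          C * (Fintype.card W : ℝ) ^ q *
            (G.edgeFinset.card : ℝ) ^ (((p : ℝ) - q) / 2) := by
  classical
  refine ⟨(2 : ℝ) ^ p, by positivity, ?_⟩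
  intro W _ _ G _
  set n := Fintype.card W with hn
  set m := G.edgeFinset.card with hm
  -- Step 1: inject homomorphisms into tuples of part-maps
  have step1 : Nat.card {f : S →g G // Function.Injective f} ≤
      Nat.card (∀ B : {B // B ∈ P.parts}, PartMaps S G B.1) := by
    apply Nat.card_le_card_of_injective
      (fun (f : {f : S →g G // Function.Injective f}) (B : {B // B ∈ P.parts}) =>
        (⟨fun x => f.1 x.1, fun u v h => f.1.map_adj h⟩ : PartMaps S G B.1))
    intro f1 f2 h
    apply Subtype.ext
    apply DFunLike.ext
    intro v
    obtain ⟨B, hB, hvB⟩ := P.exists_mem (Finset.mem_univ v)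
    have h2 := congrArg Subtype.val (congrFun h ⟨B, hB⟩)
    exact congrFun h2 ⟨v, hvB⟩
  have step2 : Nat.card (∀ B : {B // B ∈ P.parts}, PartMaps S G B.1) =
      ∏ B ∈ P.parts.attach, Nat.card (PartMaps S G B.1) := by
    rw [Nat.card_pi, ← Finset.univ_eq_attach]
  -- per-part bounds
  have hbound : ∀ B ∈ P.parts, (Nat.card (PartMaps S G B) : ℝ) ≤
      (if B.card = 1 then (n : ℝ) else (2 * (m : ℝ)) ^ ((B.card : ℝ) / 2)) := by
    intro B hB
    by_cases h1 : B.card = 1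
    · rw [if_pos h1]
      exact_mod_cast card_partMaps_singleton S G B h1
    · rw [if_neg h1]
      have hle : 1 < B.card := by
        have := (P.nonempty_of_mem_parts hB).card_pos
        omega
      rcases hparts B hB hle with ⟨hc2, u, hu, v, hv, huv⟩ | ⟨hodd, hham⟩
      · have := card_partMaps_pair S G B hc2 hu hv huv
        calc (Nat.card (PartMaps S G B) : ℝ) ≤ 2 * (m : ℝ) := by exact_mod_cast this
          _ = (2 * (m : ℝ)) ^ ((B.card : ℝ) / 2) := by
              rw [hc2]; norm_num
      · exact card_partMaps_odd S G B hodd (by omega) hham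
  -- master inequality
  have hifnonneg : ∀ B ∈ P.parts, (0:ℝ) ≤
      (if B.card = 1 then (n : ℝ) else (2 * (m : ℝ)) ^ ((B.card : ℝ) / 2)) := by
    intro B _
    split
    · positivity
    · positivity
  have master : (Nat.card {f : S →g G // Function.Injective f} : ℝ) ≤
      (n : ℝ) ^ q * ∏ B ∈ P.parts.filter (fun B => ¬ B.card = 1),
        (2 * (m : ℝ)) ^ ((B.card : ℝ) / 2) := by
    calc (Nat.card {f : S →g G // Function.Injective f} : ℝ)
        ≤ (Nat.card (∀ B : {B // B ∈ P.parts}, PartMaps S G B.1) : ℝ) := by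
          exact_mod_cast step1
      _ = ∏ B ∈ P.parts.attach, (Nat.card (PartMaps S G B.1) : ℝ) := by
          rw [step2]; push_cast; rfl
      _ ≤ ∏ B ∈ P.parts.attach,
          (if B.1.card = 1 then (n : ℝ) else (2 * (m : ℝ)) ^ ((B.1.card : ℝ) / 2)) := by
          apply Finset.prod_le_prod
          · intro B _
            positivity
          · intro B _
            exact hbound B.1 B.2
      _ = ∏ B ∈ P.parts,
          (if B.card = 1 then (n : ℝ) else (2 * (m : ℝ)) ^ ((B.card : ℝ) / 2)) :=
          Finset.prod_attach P.parts
            (fun B => if B.card = 1 then (n : ℝ) else (2 * (m : ℝ)) ^ ((B.card : ℝ) / 2))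
      _ = (∏ B ∈ P.parts.filter (fun B => B.card = 1), (n : ℝ)) *
          ∏ B ∈ P.parts.filter (fun B => ¬ B.card = 1),
            (2 * (m : ℝ)) ^ ((B.card : ℝ) / 2) := Finset.prod_ite _ _
      _ = (n : ℝ) ^ q * ∏ B ∈ P.parts.filter (fun B => ¬ B.card = 1),
            (2 * (m : ℝ)) ^ ((B.card : ℝ) / 2) := by
          rw [Finset.prod_const, hq]
  -- sums of part sizes
  have hsum_all : ∑ B ∈ P.parts, B.card = p := by
    rw [P.sum_card_parts, Finset.card_univ, hp]
  have hsum1 : ∑ B ∈ P.parts.filter (fun B => B.card = 1), B.card = q := by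
    rw [Finset.sum_congr rfl (fun B hB => (Finset.mem_filter.mp hB).2), Finset.sum_const,
      hq, smul_eq_mul, mul_one]
  have hsplit := Finset.sum_filter_add_sum_filter_not P.parts (fun B => B.card = 1)
    (fun B => B.card)
  rw [hsum1, hsum_all] at hsplit
  have hqp : q ≤ p := by omega
  have hsum2 : ∑ B ∈ P.parts.filter (fun B => ¬ B.card = 1), B.card = p - q := by omega
  rcases Finset.eq_empty_or_nonempty (P.parts.filter (fun B => ¬ B.card = 1)) with he | hne
  · -- all parts singletons: p = q
    have hpq : p = q := by
      rw [he, Finset.sum_empty] at hsum2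
      omega
    rw [he, Finset.prod_empty, mul_one] at master
    have h0 : ((p : ℝ) - q) / 2 = 0 := by rw [hpq]; ring
    rw [h0, Real.rpow_zero, mul_one]
    have h2p : (1 : ℝ) ≤ 2 ^ p := one_le_pow₀ one_le_two
    calc (Nat.card {f : S →g G // Function.Injective f} : ℝ) ≤ (n : ℝ) ^ q := master
      _ ≤ 2 ^ p * (n : ℝ) ^ q := by nlinarith [pow_nonneg (Nat.cast_nonneg (α := ℝ) n) q]
  · rcases Nat.eq_zero_or_pos m with hm0 | hmpos
    · -- no edges: the product vanishes
      obtain ⟨B0, hB0⟩ := hne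
      have hB0' := Finset.mem_filter.mp hB0
      have hc2 : 2 ≤ B0.card := by
        have := (P.nonempty_of_mem_parts hB0'.1).card_pos
        have := hB0'.2
        omega
      have hzero : ∏ B ∈ P.parts.filter (fun B => ¬ B.card = 1),
          (2 * (m : ℝ)) ^ ((B.card : ℝ) / 2) = 0 := by
        apply Finset.prod_eq_zero hB0
        rw [hm0]
        push_cast
        rw [mul_zero]
        apply Real.zero_rpow
        positivity
      rw [hzero, mul_zero] at master
      have hrhs : (0:ℝ) ≤ 2 ^ p * (n : ℝ) ^ q * (m : ℝ) ^ (((p : ℝ) - q) / 2) := by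
        positivity
      linarith
    · -- the generic case
      have hx : (0 : ℝ) < 2 * (m : ℝ) := by positivity
      have hprod : ∏ B ∈ P.parts.filter (fun B => ¬ B.card = 1),
          (2 * (m : ℝ)) ^ ((B.card : ℝ) / 2)
          = (2 * (m : ℝ)) ^ (((p : ℝ) - q) / 2) := by
        rw [prod_rpow_div_two hx, hsum2]
        congr 2
        push_cast [hqp]
        ring
      rw [hprod] at master
      have hsplit2 : (2 * (m : ℝ)) ^ (((p : ℝ) - q) / 2) =
          (2:ℝ) ^ (((p : ℝ) - q) / 2) * (m : ℝ) ^ (((p : ℝ) - q) / 2) :=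
        Real.mul_rpow zero_le_two (Nat.cast_nonneg m)
      have h2le : (2:ℝ) ^ (((p : ℝ) - q) / 2) ≤ 2 ^ p := by
        rw [← Real.rpow_natCast 2 p]
        apply Real.rpow_le_rpow_of_exponent_le one_le_two
        have h0q : (0:ℝ) ≤ q := Nat.cast_nonneg q
        have hqp' : (q : ℝ) ≤ p := Nat.cast_le.mpr hqp
        linarith
      calc (Nat.card {f : S →g G // Function.Injective f} : ℝ)
          ≤ (n : ℝ) ^ q * ((2:ℝ) ^ (((p : ℝ) - q) / 2) * (m : ℝ) ^ (((p : ℝ) - q) / 2)) := by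
            rw [← hsplit2]; exact master
        _ ≤ (n : ℝ) ^ q * ((2:ℝ) ^ p * (m : ℝ) ^ (((p : ℝ) - q) / 2)) := by
            have hm' : (0:ℝ) ≤ (m : ℝ) ^ (((p : ℝ) - q) / 2) := by positivity
            have hn' : (0:ℝ) ≤ (n : ℝ) ^ q := by positivity
            exact mul_le_mul_of_nonneg_left (mul_le_mul_of_nonneg_right h2le hm') hn'
        _ = 2 ^ p * (n : ℝ) ^ q * (m : ℝ) ^ (((p : ℝ) - q) / 2) := by ring
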